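/- Let S = ⋃_{α∈A} S_α be a topological inverse semigroup such that (i) each S_α is an absolutely H-closed subsemigroup in the class of topological inverse semigroups, and (ii) there exists an absolutely H-closed (in that class) subsemigroup T of S with S_α · S_β ⊆ T for all α ≠ β. Then S is absolutely H-closed in the class of topological inverse semigroups. -/

import Mathlib

universe u

/-- `inv` is an inversion making the semigroup an inverse semigroup. -/
def InvSgrp {S : Type*} [Semigroup S] (inv : S → S) : Prop :=
  (∀ x : S, x * inv x * x = x) ∧ (∀ x : S, inv x * x * inv x = inv x) ∧
    ∀ x y : S, x * y * x = x → y * x * y = y → y = inv x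

/-- A topological semigroup `S` is `H`-closed in the class of topological inverse
semigroups if whenever `S` is embedded (topologically and multiplicatively) into a
topological inverse semigroup `T`, its image is closed in `T`. -/
def IsHClosedTIS (S : Type u) [TopologicalSpace S] [Semigroup S] : Prop :=
  ∀ (T : Type u) [TopologicalSpace T] [Semigroup T] [T2Space T] [ContinuousMul T]
    (invT : T → T), Continuous invT → InvSgrp invT →
    ∀ f : S → T, Topology.IsEmbedding f → (∀ x y : S, f (x * y) = f x * f y) →
      IsClosed (Set.range f)

/-- A topological semigroup `S` is absolutely `H`-closed in the class of topological
inverse semigroups if for every continuous homomorphism `h` of `S` into a topological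
inverse semigroup `G`, the image `h(S)` is `H`-closed in that class. -/
def IsAbsHClosedTIS (S : Type u) [TopologicalSpace S] [Semigroup S] : Prop :=
  ∀ (G : Type u) [TopologicalSpace G] [Semigroup G] [T2Space G] [ContinuousMul G]
    (invG : G → G), Continuous invG → InvSgrp invG →
    ∀ h : S → G, Continuous h → (∀ x y : S, h (x * y) = h x * h y) →
      ∀ R : Subsemigroup G, (R : Set G) = Set.range h → IsHClosedTIS ↥R

/-- Let `S = ⋃_{α} S_α` be a topological inverse semigroup such that
(i) each `S_α` is an absolutely `H`-closed subsemigroup in the class of topological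
inverse semigroups, and (ii) there is an absolutely `H`-closed (in that class)
subsemigroup `T` with `S_α · S_β ⊆ T` for all `α ≠ β`.  Then `S` is absolutely
`H`-closed in the class of topological inverse semigroups. -/
theorem stmt_12 {S : Type u} [TopologicalSpace S] [Semigroup S] [T2Space S]
    [ContinuousMul S]
    (inv : S → S) (hinvc : Continuous inv) (hinv : InvSgrp inv)
    {ι : Type*} (A : ι → Subsemigroup S)
    (hAinv : ∀ α, ∀ x ∈ A α, inv x ∈ A α)
    (hcover : ∀ x : S, ∃ α, x ∈ A α)
    (hHc : ∀ α, IsAbsHClosedTIS ↥(A α))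
    (T : Subsemigroup S) (hTinv : ∀ x ∈ T, inv x ∈ T)
    (hTHc : IsAbsHClosedTIS ↥T)
    (hprod : ∀ α β, α ≠ β → ∀ x ∈ A α, ∀ y ∈ A β, x * y ∈ T) :
    IsAbsHClosedTIS S := by
  intro G _ _ _ _ invG hinvGc hinvG h hc hhom R hR
  intro Tt _ _ _ _ invT hinvTc hinvT f hfemb hfhom
  classical
  have hmem : ∀ s : S, h s ∈ R := fun s => by
    have : h s ∈ (R : Set G) := by rw [hR]; exact Set.mem_range_self s
    exact this
  set e : S → ↥R := fun s => ⟨h s, hmem s⟩ with he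
  have he_cont : Continuous e := Continuous.subtype_mk hc _
  set g : S → Tt := fun s => f (e s) with hg
  have hg_cont : Continuous g := hfemb.continuous.comp he_cont
  have ghom : ∀ x y : S, g (x * y) = g x * g y := by
    intro x y
    have hexy : e (x * y) = e x * e y := Subtype.ext (hhom x y)
    show f (e (x * y)) = f (e x) * f (e y)
    rw [hexy, hfhom]
  have hrange : Set.range f = Set.range g := by
    apply Set.Subset.antisymm
    · rintro _ ⟨r, rfl⟩
      have : (r : G) ∈ Set.range h := by rw [← hR]; exact r.2
      obtain ⟨s, hs⟩ := this
      exact ⟨s, by show f (e s) = f r; congr 1; exact Subtype.ext hs⟩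
    · rintro _ ⟨s, rfl⟩; exact ⟨e s, rfl⟩
  rw [hrange]
  -- images of absolutely H-closed subsemigroups are closed
  have keyClosed : ∀ P : Subsemigroup S, IsAbsHClosedTIS ↥P →
      IsClosed (g '' (P : Set S)) := by
    intro P hP
    have mulmem : ∀ {a b : Tt}, a ∈ g '' (P : Set S) → b ∈ g '' (P : Set S) →
        a * b ∈ g '' (P : Set S) := by
      rintro _ _ ⟨u, hu, rfl⟩ ⟨v, hv, rfl⟩
      exact ⟨u * v, P.mul_mem hu hv, ghom u v⟩
    set R' : Subsemigroup Tt := { carrier := g '' (P : Set S), mul_mem' := mulmem } with hR'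
    have hset : (R' : Set Tt) = Set.range (fun p : ↥P => g p.val) := by
      show g '' (P : Set S) = Set.range (g ∘ Subtype.val)
      rw [Set.range_comp, Subtype.range_val]
    have h1 : IsHClosedTIS ↥R' :=
      hP Tt invT hinvTc hinvT (fun p => g p.val)
        (hg_cont.comp continuous_subtype_val)
        (fun x y => ghom x.val y.val)
        R' hset
    have h2 := h1 Tt invT hinvTc hinvT Subtype.val Topology.IsEmbedding.subtypeVal
      (fun _ _ => rfl)
    rwa [Subtype.range_val] at h2
  have hclA : ∀ α, IsClosed (g '' ((A α : Set S))) := fun α => keyClosed _ (hHc α)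
  have hclT : IsClosed (g '' ((T : Set S))) := keyClosed _ hTHc
  have ginv : ∀ s : S, g (inv s) = invT (g s) := by
    intro s
    refine hinvT.2.2 (g s) (g (inv s)) ?_ ?_
    · rw [← ghom, ← ghom, hinv.1]
    · rw [← ghom, ← ghom, hinv.2.1]
  refine isClosed_of_closure_subset ?_
  intro x hx
  haveI hF : (Filter.comap g (nhds x)).NeBot := by
    refine Filter.comap_neBot (fun t ht => ?_)
    obtain ⟨y, hyt, s, rfl⟩ := mem_closure_iff_nhds.mp hx t ht
    exact ⟨s, hyt⟩
  set F := Filter.comap g (nhds x) with hFdef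
  have hTend : Filter.Tendsto g F (nhds x) := Filter.tendsto_comap
  by_cases hcase : ∃ α, (F ⊓ Filter.principal ((A α : Set S))).NeBot
  · obtain ⟨α, hα⟩ := hcase
    haveI := hα
    have hxcl : x ∈ closure (g '' ((A α : Set S))) := by
      refine mem_closure_of_tendsto (b := F ⊓ Filter.principal ((A α : Set S)))
        (hTend.mono_left inf_le_left) ?_
      exact Filter.eventually_inf_principal.mpr
        (Filter.Eventually.of_forall fun s hs => ⟨s, hs, rfl⟩)
    obtain ⟨s, _, hs⟩ := (hclA α).closure_subset hxcl
    exact ⟨s, hs⟩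
  · push_neg at hcase
    have hcompl : ∀ α, ((A α : Set S))ᶜ ∈ F := by
      intro α
      have hbot : F ⊓ Filter.principal ((A α : Set S)) = ⊥ := by
        by_contra hne
        exact hne (hcase α)
      exact Filter.inf_principal_eq_bot.mp hbot
    choose c hc' using hcover
    haveI hP2 : ((F ×ˢ F) ⊓ Filter.principal {p : S × S | p.1 * inv p.2 ∈ T}).NeBot := by
      rw [Filter.inf_principal_neBot_iff]
      intro U hU
      obtain ⟨U1, hU1, U2, hU2, hsub⟩ := Filter.mem_prod_iff.mp hU
      obtain ⟨u, hu⟩ := Filter.nonempty_of_mem hU1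
      obtain ⟨v, hv1, hv2⟩ := Filter.nonempty_of_mem (Filter.inter_mem hU2 (hcompl (c u)))
      refine ⟨(u, v), hsub ⟨hu, hv1⟩, ?_⟩
      have hne : c u ≠ c v := fun hEq => hv2 (by rw [hEq]; exact hc' v)
      exact hprod (c u) (c v) hne u (hc' u) (inv v) (hAinv _ v (hc' v))
    have hTendPair : Filter.Tendsto (fun p : S × S => g p.1 * invT (g p.2))
        ((F ×ˢ F) ⊓ Filter.principal {p : S × S | p.1 * inv p.2 ∈ T})
        (nhds (x * invT x)) := by
      have h1 : Filter.Tendsto (fun p : S × S => (g p.1, g p.2)) (F ×ˢ F)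
          (nhds x ×ˢ nhds x) := hTend.prodMap hTend
      have h2 : Filter.Tendsto (fun q : Tt × Tt => q.1 * invT q.2)
          (nhds x ×ˢ nhds x) (nhds (x * invT x)) := by
        rw [← nhds_prod_eq]
        exact (continuous_fst.mul (hinvTc.comp continuous_snd)).tendsto (x, x)
      exact (h2.comp h1).mono_left inf_le_left
    have hxx : x * invT x ∈ g '' ((T : Set S)) := by
      refine hclT.closure_subset (mem_closure_of_tendsto hTendPair ?_)
      refine Filter.eventually_inf_principal.mpr (Filter.Eventually.of_forall ?_)
      intro p hp
      exact ⟨p.1 * inv p.2, hp, by rw [ghom, ginv]⟩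
    obtain ⟨t, htT, htg⟩ := hxx
    have hTend2 : Filter.Tendsto (fun s => g t * g s) F (nhds x) := by
      have h3 : Filter.Tendsto (fun s => g t * g s) F (nhds (g t * x)) :=
        hTend.const_mul (g t)
      have hx' : g t * x = x := by rw [htg]; exact hinvT.1 x
      rwa [hx'] at h3
    have hxcl : x ∈ closure (g '' ((T : Set S))) := by
      refine mem_closure_of_tendsto hTend2 ?_
      filter_upwards [hcompl (c t)] with s hs
      have hne : c t ≠ c s := fun hEq => hs (by rw [hEq]; exact hc' s)
      exact ⟨t * s, hprod (c t) (c s) hne t (hc' t) s (hc' s), ghom t s⟩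
    obtain ⟨s, _, hgs⟩ := hclT.closure_subset hxcl
    exact ⟨s, hgs⟩
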